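/- (Deterministic core of Theorem 3.2(a), defective case.) If ∫₀^∞ g(s) ds < 1, then there exists κ > 0 such that e^{κt}·M(t) → 0 as t → ∞. -/

import Mathlib

open MeasureTheory Filter Set

noncomputable def Gν (α : ℝ) (ν : MeasureTheory.SignedMeasure ℝ) (ψ : ℝ → ℝ) (t : ℝ) : ℝ :=
  (∫ u in Set.Icc (-α) 0, ψ (t + u) ∂ν.toJordanDecomposition.posPart) -
  (∫ u in Set.Icc (-α) 0, ψ (t + u) ∂ν.toJordanDecomposition.negPart)

lemma Gν_meas (α : ℝ) (ν : MeasureTheory.SignedMeasure ℝ) {ψ : ℝ → ℝ} (hψ : Measurable ψ) :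
    Measurable (Gν α ν ψ) := by
  have key : ∀ μ : Measure ℝ, SFinite μ →
      Measurable (fun t => ∫ u in Set.Icc (-α) 0, ψ (t + u) ∂μ) := by
    intro μ hμ
    have hsm : StronglyMeasurable (fun p : ℝ × ℝ => ψ (p.1 + p.2)) :=
      (hψ.comp (measurable_fst.add measurable_snd)).stronglyMeasurable
    exact (hsm.integral_prod_right' (ν := μ.restrict (Set.Icc (-α) 0))).measurable
  exact ((key _ inferInstance).sub (key _ inferInstance))

lemma Gν_bound (α : ℝ) (hα : 0 ≤ α) (ν : MeasureTheory.SignedMeasure ℝ) (ψ : ℝ → ℝ)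
    (K γ : ℝ) (hK : 0 ≤ K) (hγ : 0 ≤ γ) (hm : Measurable ψ) (t : ℝ)
    (hψ : ∀ s, t - α ≤ s → |ψ s| ≤ K * Real.exp (-γ * s)) :
    |Gν α ν ψ t| ≤
      ((ν.toJordanDecomposition.posPart (Set.Icc (-α) 0)).toReal +
        (ν.toJordanDecomposition.negPart (Set.Icc (-α) 0)).toReal) *
        (K * Real.exp (γ * α)) * Real.exp (-γ * t) := by
  have key : ∀ μ : Measure ℝ, IsFiniteMeasure μ →
      |∫ u in Set.Icc (-α) 0, ψ (t + u) ∂μ| ≤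
        (K * Real.exp (γ * α) * Real.exp (-γ * t)) * (μ (Set.Icc (-α) 0)).toReal := by
    intro μ hμ
    have := norm_setIntegral_le_of_norm_le_const_ae' (μ := μ)
      (s := Set.Icc (-α) 0) (f := fun u => ψ (t + u))
      (C := K * Real.exp (γ * α) * Real.exp (-γ * t)) (measure_lt_top μ _)
      (ae_of_all _ ?_)
    · simpa [Real.norm_eq_abs, measureReal_def] using this
    · intro u hu
      have h1 : t - α ≤ t + u := by linarith [hu.1]
      have h2 := hψ (t + u) h1
      rw [Real.norm_eq_abs]
      calc |ψ (t + u)| ≤ K * Real.exp (-γ * (t + u)) := h2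
        _ ≤ K * (Real.exp (γ * α) * Real.exp (-γ * t)) := by
            rw [← Real.exp_add]
            exact mul_le_mul_of_nonneg_left (Real.exp_le_exp.2 (by nlinarith [hu.1, hu.2])) hK
        _ = K * Real.exp (γ * α) * Real.exp (-γ * t) := by ring
  have h1 := key ν.toJordanDecomposition.posPart inferInstance
  have h2 := key ν.toJordanDecomposition.negPart inferInstance
  unfold Gν
  calc |(∫ u in Set.Icc (-α) 0, ψ (t + u) ∂ν.toJordanDecomposition.posPart) -
      (∫ u in Set.Icc (-α) 0, ψ (t + u) ∂ν.toJordanDecomposition.negPart)|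
      ≤ |∫ u in Set.Icc (-α) 0, ψ (t + u) ∂ν.toJordanDecomposition.posPart| +
        |∫ u in Set.Icc (-α) 0, ψ (t + u) ∂ν.toJordanDecomposition.negPart| := abs_sub _ _
    _ ≤ (K * Real.exp (γ * α) * Real.exp (-γ * t)) *
          (ν.toJordanDecomposition.posPart (Set.Icc (-α) 0)).toReal +
        (K * Real.exp (γ * α) * Real.exp (-γ * t)) *
          (ν.toJordanDecomposition.negPart (Set.Icc (-α) 0)).toReal := add_le_add h1 h2
    _ = ((ν.toJordanDecomposition.posPart (Set.Icc (-α) 0)).toReal +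
          (ν.toJordanDecomposition.negPart (Set.Icc (-α) 0)).toReal) *
          (K * Real.exp (γ * α)) * Real.exp (-γ * t) := by ring

lemma intIntegrable_of_bdd {h : ℝ → ℝ} (hm : Measurable h) {a b Kb : ℝ}
    (hb : ∀ s ∈ Set.uIoc a b, |h s| ≤ Kb) : IntervalIntegrable h MeasureTheory.volume a b := by
  rw [intervalIntegrable_iff]
  refine Integrable.mono' (g := fun _ => Kb)
    ((integrableOn_const_iff (C := Kb)).mpr (Or.inr measure_Ioc_lt_top))
    hm.aestronglyMeasurable ?_
  exact (ae_restrict_iff' measurableSet_uIoc).mpr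
    (ae_of_all _ fun s hs => by simpa [Real.norm_eq_abs] using hb s hs)


set_option maxHeartbeats 2000000 in
theorem stmt0 (α : ℝ) (hα : 0 ≤ α) (ν : MeasureTheory.SignedMeasure ℝ)
    (C γ : ℝ) (hC : 0 < C) (hγ : 0 < γ)
    (r : ℝ → ℝ) (hrmeas : Measurable r) (hrneg : ∀ u < (0:ℝ), r u = 0)
    (hrdecay : ∀ t ≥ (0:ℝ), |r t| ≤ C * Real.exp (-γ * t))
    (x : ℝ → ℝ) (hxcont : Continuous x)
    (hxdecay : ∀ t ≥ (0:ℝ), |x t| ≤ C * Real.exp (-γ * t))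
    (f g : ℝ → ℝ)
    (hf : ∀ t ≥ (0:ℝ), f t = (Gν α ν x t) ^ 2)
    (hg : ∀ t ≥ (0:ℝ), g t = (Gν α ν r t) ^ 2)
    (y : ℝ → ℝ) (hymeas : Measurable y) (hynn : ∀ t ≥ (0:ℝ), 0 ≤ y t)
    (hybdd : ∀ T : ℝ, ∃ K : ℝ, ∀ t ∈ Set.Icc (0:ℝ) T, y t ≤ K)
    (hren : ∀ t ≥ (0:ℝ), y t = f t + ∫ s in (0:ℝ)..t, g (t - s) * y s)
    (M : ℝ → ℝ)
    (hM : ∀ t ≥ (0:ℝ), M t = (x t) ^ 2 + ∫ s in (0:ℝ)..t, (r (t - s)) ^ 2 * y s)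
    (hdefective : (∫ s in Set.Ioi (0:ℝ), g s) < 1) :
    ∃ κ > (0:ℝ), Tendsto (fun t => Real.exp (κ * t) * M t) atTop (nhds 0) := by
  -- global exponential bounds for x (on [-α,∞)) and r (on ℝ)
  obtain ⟨Kc, hKc⟩ : ∃ Kc, ∀ s ∈ Set.Icc (-α) 0, |x s| ≤ Kc := by
    obtain ⟨Kc, hKc⟩ := isCompact_Icc.exists_bound_of_continuousOn
      (s := Set.Icc (-α) 0) hxcont.continuousOn
    exact ⟨Kc, fun s hs => by simpa [Real.norm_eq_abs] using hKc s hs⟩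
  set Kx : ℝ := max C (max Kc 0) with hKxdef
  have hKx0 : 0 ≤ Kx := le_trans hC.le (le_max_left _ _)
  have hx' : ∀ s, -α ≤ s → |x s| ≤ Kx * Real.exp (-γ * s) := by
    intro s hs
    rcases le_or_gt 0 s with h | h
    · exact (hxdecay s h).trans
        (mul_le_mul_of_nonneg_right (le_max_left _ _) (Real.exp_pos _).le)
    · have h1 : |x s| ≤ Kc := hKc s ⟨hs, h.le⟩
      have h2 : (1:ℝ) ≤ Real.exp (-γ * s) := Real.one_le_exp (by nlinarith)
      have h3 : Kc ≤ Kx := le_trans (le_max_left Kc 0) (le_max_right _ _)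
      nlinarith
  have hr' : ∀ s, |r s| ≤ Kx * Real.exp (-γ * s) := by
    intro s
    rcases le_or_gt 0 s with h | h
    · exact (hrdecay s h).trans
        (mul_le_mul_of_nonneg_right (le_max_left _ _) (Real.exp_pos _).le)
    · rw [hrneg s h, abs_zero]; positivity
  set m : ℝ := (ν.toJordanDecomposition.posPart (Set.Icc (-α) 0)).toReal +
      (ν.toJordanDecomposition.negPart (Set.Icc (-α) 0)).toReal with hmdef
  set B : ℝ := m * (Kx * Real.exp (γ * α)) with hBdef
  have hGr : ∀ t, |Gν α ν r t| ≤ B * Real.exp (-γ * t) :=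
    fun t => Gν_bound α hα ν r Kx γ hKx0 hγ.le hrmeas t (fun s _ => hr' s)
  have hGx : ∀ t, 0 ≤ t → |Gν α ν x t| ≤ B * Real.exp (-γ * t) :=
    fun t ht => Gν_bound α hα ν x Kx γ hKx0 hγ.le hxcont.measurable t
      (fun s hs => hx' s (by linarith))
  set A : ℝ := B ^ 2 with hAdef
  have hA0 : 0 ≤ A := sq_nonneg B
  set G2 : ℝ → ℝ := fun u => (Gν α ν r u) ^ 2 with hG2def
  have hG2meas : Measurable G2 := (Gν_meas α ν hrmeas).pow_const 2
  have hG2nn : ∀ u, 0 ≤ G2 u := fun u => sq_nonneg _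
  have hexpsq : ∀ c u : ℝ, (c * Real.exp (-γ * u)) ^ 2 = c ^ 2 * Real.exp (-(2*γ) * u) := by
    intro c u
    rw [mul_pow, sq (Real.exp _), ← Real.exp_add]
    ring_nf
  have hG2le : ∀ u, G2 u ≤ A * Real.exp (-(2*γ) * u) := by
    intro u
    calc G2 u = |Gν α ν r u| ^ 2 := (sq_abs _).symm
      _ ≤ (B * Real.exp (-γ * u)) ^ 2 := pow_le_pow_left₀ (abs_nonneg _) (hGr u) 2
      _ = A * Real.exp (-(2*γ) * u) := hexpsq B u
  have hG2bd : ∀ u, 0 ≤ u → G2 u ≤ A := by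
    intro u hu
    refine (hG2le u).trans ?_
    have : Real.exp (-(2*γ) * u) ≤ 1 := Real.exp_le_one_iff.2 (by nlinarith)
    nlinarith
  have hfle : ∀ t, 0 ≤ t → f t ≤ A * Real.exp (-(2*γ) * t) := by
    intro t ht
    rw [hf t ht]
    calc (Gν α ν x t) ^ 2 = |Gν α ν x t| ^ 2 := (sq_abs _).symm
      _ ≤ (B * Real.exp (-γ * t)) ^ 2 := pow_le_pow_left₀ (abs_nonneg _) (hGx t ht) 2
      _ = A * Real.exp (-(2*γ) * t) := hexpsq B t
  -- the defective condition in terms of G2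
  have hI1 : (∫ u in Set.Ioi (0:ℝ), G2 u) < 1 := by
    have : (∫ u in Set.Ioi (0:ℝ), G2 u) = ∫ s in Set.Ioi (0:ℝ), g s :=
      setIntegral_congr_fun measurableSet_Ioi (fun s hs => (hg s (le_of_lt hs)).symm)
    rwa [this]
  -- integrability facts
  have hexpint : IntegrableOn (fun u => A * Real.exp (-γ * u)) (Set.Ioi 0) volume :=
    (exp_neg_integrableOn_Ioi 0 hγ).const_mul A
  have hθint : ∀ κ, 0 ≤ κ → κ ≤ γ →
      IntegrableOn (fun u => Real.exp (κ * u) * G2 u) (Set.Ioi 0) volume := by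
    intro κ hκ0 hκγ
    refine Integrable.mono' hexpint
      ((Real.measurable_exp.comp (measurable_const.mul measurable_id)).mul hG2meas).aestronglyMeasurable ?_
    refine (ae_restrict_iff' measurableSet_Ioi).mpr (ae_of_all _ fun u hu => ?_)
    have hu0 : (0:ℝ) ≤ u := (le_of_lt hu)
    rw [Real.norm_eq_abs, abs_of_nonneg (mul_nonneg (Real.exp_pos _).le (hG2nn u))]
    calc Real.exp (κ * u) * G2 u ≤ Real.exp (γ * u) * (A * Real.exp (-(2*γ) * u)) := by
          apply mul_le_mul (Real.exp_le_exp.2 (by nlinarith)) (hG2le u) (hG2nn u) (Real.exp_pos _).le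
      _ = A * (Real.exp (γ * u) * Real.exp (-(2*γ) * u)) := by ring
      _ = A * Real.exp (-γ * u) := by rw [← Real.exp_add]; ring_nf
  -- choose κ by dominated convergence
  have hconv : Tendsto (fun n : ℕ => ∫ u in Set.Ioi (0:ℝ), Real.exp ((γ/(n+1)) * u) * G2 u)
      atTop (nhds (∫ u in Set.Ioi (0:ℝ), G2 u)) := by
    apply tendsto_integral_of_dominated_convergence (fun u => A * Real.exp (-γ * u))
    · intro n
      exact ((Real.measurable_exp.comp (measurable_const.mul measurable_id)).mul
        hG2meas).aestronglyMeasurable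
    · exact hexpint
    · intro n
      refine (ae_restrict_iff' measurableSet_Ioi).mpr (ae_of_all _ fun u hu => ?_)
      have hu0 : (0:ℝ) ≤ u := le_of_lt hu
      have hκn : γ/((n:ℝ)+1) ≤ γ := by
        apply div_le_self hγ.le
        have : (0:ℝ) ≤ (n:ℝ) := Nat.cast_nonneg n
        linarith
      rw [Real.norm_eq_abs, abs_of_nonneg (mul_nonneg (Real.exp_pos _).le (hG2nn u))]
      calc Real.exp ((γ/(n+1)) * u) * G2 u
          ≤ Real.exp (γ * u) * (A * Real.exp (-(2*γ) * u)) := by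
            apply mul_le_mul (Real.exp_le_exp.2 ?_) (hG2le u) (hG2nn u) (Real.exp_pos _).le
            exact mul_le_mul_of_nonneg_right hκn hu0
        _ = A * (Real.exp (γ * u) * Real.exp (-(2*γ) * u)) := by ring
        _ = A * Real.exp (-γ * u) := by rw [← Real.exp_add]; ring_nf
    · refine ae_of_all _ fun u => ?_
      have h1 : Tendsto (fun n : ℕ => ((n:ℝ)+1)) atTop atTop :=
        tendsto_atTop_add_const_right _ 1 tendsto_natCast_atTop_atTop
      have h2 : Tendsto (fun n : ℕ => γ/((n:ℝ)+1)) atTop (nhds 0) :=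
        Tendsto.div_atTop tendsto_const_nhds h1
      have h3 : Tendsto (fun n : ℕ => (γ/((n:ℝ)+1)) * u) atTop (nhds 0) := by
        simpa using h2.mul_const u
      have h4 : Tendsto (fun n : ℕ => Real.exp ((γ/((n:ℝ)+1)) * u)) atTop (nhds 1) := by
        simpa [Function.comp_def] using (Real.continuous_exp.tendsto 0).comp h3
      simpa using h4.mul_const (G2 u)
  obtain ⟨n, hn⟩ := (hconv.eventually_lt_const hI1).exists
  set κ : ℝ := γ/((n:ℝ)+1) with hκdef
  have hκpos : 0 < κ := by positivity
  have hκγ : κ ≤ γ := by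
    apply div_le_self hγ.le
    have : (0:ℝ) ≤ (n:ℝ) := Nat.cast_nonneg n
    linarith
  set θ : ℝ := ∫ u in Set.Ioi (0:ℝ), Real.exp (κ * u) * G2 u with hθdef
  have hθlt : θ < 1 := hn
  have hθnn : 0 ≤ θ :=
    setIntegral_nonneg measurableSet_Ioi (fun u _ => mul_nonneg (Real.exp_pos _).le (hG2nn u))
  set D : ℝ := A / (1 - θ) with hDdef
  have hD0 : 0 ≤ D := div_nonneg hA0 (by linarith)
  -- key renewal bound
  have hykey : ∀ t, 0 ≤ t → Real.exp (κ * t) * y t ≤ D := by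
    intro T hT
    obtain ⟨K, hK⟩ := hybdd T
    set Sset : Set ℝ := (fun s => Real.exp (κ * s) * y s) '' Set.Icc (0:ℝ) T with hSsetdef
    have hne : Sset.Nonempty := ⟨_, ⟨0, ⟨le_refl _, hT⟩, rfl⟩⟩
    have hbdd : BddAbove Sset := by
      refine ⟨Real.exp (κ * T) * max K 0, ?_⟩
      rintro v ⟨s, hs, rfl⟩
      have h1 : Real.exp (κ * s) ≤ Real.exp (κ * T) :=
        Real.exp_le_exp.2 (mul_le_mul_of_nonneg_left hs.2 hκpos.le)
      have h2 : y s ≤ max K 0 := (hK s hs).trans (le_max_left _ _)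
      exact mul_le_mul h1 h2 (hynn s hs.1) (Real.exp_pos _).le
    set S : ℝ := sSup Sset with hSdef
    have hmem : ∀ s, s ∈ Set.Icc (0:ℝ) T → Real.exp (κ * s) * y s ≤ S :=
      fun s hs => le_csSup hbdd ⟨s, hs, rfl⟩
    have hSnn : 0 ≤ S := le_trans (by simpa using hynn 0 le_rfl) (hmem 0 ⟨le_refl _, hT⟩)
    have hstep : ∀ t ∈ Set.Icc (0:ℝ) T, Real.exp (κ * t) * y t ≤ A + θ * S := by
      intro t ht
      have ht0 : 0 ≤ t := ht.1
      have hcongr : (∫ s in (0:ℝ)..t, g (t - s) * y s) = ∫ s in (0:ℝ)..t, G2 (t - s) * y s := by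
        apply intervalIntegral.integral_congr
        intro s hs
        rw [Set.uIcc_of_le ht0] at hs
        show g (t - s) * y s = G2 (t - s) * y s
        rw [hg (t - s) (by linarith [hs.2] : (0:ℝ) ≤ t - s)]
      have hmeas1 : Measurable fun s => G2 (t - s) * y s :=
        (hG2meas.comp (measurable_const.sub measurable_id)).mul hymeas
      have hint1 : IntervalIntegrable (fun s => G2 (t - s) * y s) volume 0 t := by
        apply intIntegrable_of_bdd hmeas1 (Kb := A * max K 0)
        intro s hs
        rw [Set.uIoc_of_le ht0] at hs
        have h1 : G2 (t - s) ≤ A := hG2bd _ (by linarith [hs.2])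
        have h2 : y s ≤ max K 0 := (hK s ⟨hs.1.le, hs.2.trans ht.2⟩).trans (le_max_left _ _)
        rw [abs_of_nonneg (mul_nonneg (hG2nn _) (hynn s hs.1.le))]
        exact mul_le_mul h1 h2 (hynn s hs.1.le) hA0
      have hmeas2 : Measurable fun s =>
          Real.exp (-(κ * t)) * S * (Real.exp (κ * (t - s)) * G2 (t - s)) := by
        apply Measurable.mul measurable_const
        exact (Real.measurable_exp.comp
          (measurable_const.mul (measurable_const.sub measurable_id))).mul
          (hG2meas.comp (measurable_const.sub measurable_id))
      have hint2 : IntervalIntegrable (fun s =>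
          Real.exp (-(κ * t)) * S * (Real.exp (κ * (t - s)) * G2 (t - s))) volume 0 t := by
        apply intIntegrable_of_bdd hmeas2
          (Kb := Real.exp (-(κ * t)) * S * (Real.exp (κ * t) * A))
        intro s hs
        rw [Set.uIoc_of_le ht0] at hs
        have h1 : Real.exp (κ * (t - s)) ≤ Real.exp (κ * t) :=
          Real.exp_le_exp.2 (by nlinarith [hs.1, hκpos.le])
        have h2 : G2 (t - s) ≤ A := hG2bd _ (by linarith [hs.2])
        have h3 : 0 ≤ Real.exp (-(κ * t)) * S := mul_nonneg (Real.exp_pos _).le hSnn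
        rw [abs_of_nonneg (mul_nonneg h3 (mul_nonneg (Real.exp_pos _).le (hG2nn _)))]
        exact mul_le_mul_of_nonneg_left
          (mul_le_mul h1 h2 (hG2nn _) (Real.exp_pos _).le) h3
      have hmono : (∫ s in (0:ℝ)..t, G2 (t - s) * y s) ≤
          ∫ s in (0:ℝ)..t, Real.exp (-(κ * t)) * S * (Real.exp (κ * (t - s)) * G2 (t - s)) := by
        apply intervalIntegral.integral_mono_on ht0 hint1 hint2
        intro s hs
        have hys : Real.exp (κ * s) * y s ≤ S := hmem s ⟨hs.1, hs.2.trans ht.2⟩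
        have hep : (0:ℝ) < Real.exp (κ * s) := Real.exp_pos _
        have hys' : y s ≤ S * Real.exp (-(κ * s)) := by
          rw [Real.exp_neg, ← div_eq_mul_inv, le_div_iff₀ hep]
          linarith [hys, mul_comm (y s) (Real.exp (κ * s))]
        have he : Real.exp (-(κ * t)) * Real.exp (κ * (t - s)) = Real.exp (-(κ * s)) := by
          rw [← Real.exp_add]; ring_nf
        calc G2 (t - s) * y s ≤ G2 (t - s) * (S * Real.exp (-(κ * s))) :=
              mul_le_mul_of_nonneg_left hys' (hG2nn _)
          _ = Real.exp (-(κ * t)) * S * (Real.exp (κ * (t - s)) * G2 (t - s)) := by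
              rw [← he]; ring
      have heq2 : (∫ s in (0:ℝ)..t,
          Real.exp (-(κ * t)) * S * (Real.exp (κ * (t - s)) * G2 (t - s))) =
          Real.exp (-(κ * t)) * S * ∫ s in (0:ℝ)..t, Real.exp (κ * (t - s)) * G2 (t - s) :=
        intervalIntegral.integral_const_mul _ _
      have heq3 : (∫ s in (0:ℝ)..t, Real.exp (κ * (t - s)) * G2 (t - s)) =
          ∫ u in (0:ℝ)..t, Real.exp (κ * u) * G2 u := by
        have := intervalIntegral.integral_comp_sub_left (a := 0) (b := t)
          (fun u => Real.exp (κ * u) * G2 u) t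
        simpa using this
      have hle4 : (∫ u in (0:ℝ)..t, Real.exp (κ * u) * G2 u) ≤ θ := by
        rw [intervalIntegral.integral_of_le ht0, hθdef]
        apply setIntegral_mono_set (hθint κ hκpos.le hκγ)
          (ae_of_all _ fun u => mul_nonneg (Real.exp_pos _).le (hG2nn u))
          (HasSubset.Subset.eventuallyLE Set.Ioc_subset_Ioi_self)
      have hINT : (∫ s in (0:ℝ)..t, g (t - s) * y s) ≤ Real.exp (-(κ * t)) * S * θ := by
        rw [hcongr]
        refine hmono.trans ?_
        rw [heq2, heq3]
        exact mul_le_mul_of_nonneg_left hle4 (mul_nonneg (Real.exp_pos _).le hSnn)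
      have hexp1 : Real.exp (κ * t) * (A * Real.exp (-(2*γ) * t)) ≤ A := by
        have h1 : Real.exp (κ * t) * Real.exp (-(2*γ) * t) = Real.exp ((κ - 2*γ) * t) := by
          rw [← Real.exp_add]; ring_nf
        have h2 : Real.exp ((κ - 2*γ) * t) ≤ 1 := Real.exp_le_one_iff.2 (by nlinarith)
        nlinarith [Real.exp_pos (κ * t), Real.exp_pos (-(2*γ) * t)]
      have hexp2 : Real.exp (κ * t) * (Real.exp (-(κ * t)) * S * θ) = θ * S := by
        rw [← mul_assoc, ← mul_assoc, ← Real.exp_add]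
        simp [mul_comm]
      calc Real.exp (κ * t) * y t
          = Real.exp (κ * t) * f t + Real.exp (κ * t) * ∫ s in (0:ℝ)..t, g (t - s) * y s := by
            rw [hren t ht0]; ring
        _ ≤ A + θ * S := by
            apply add_le_add
            · exact le_trans (mul_le_mul_of_nonneg_left (hfle t ht0) (Real.exp_pos _).le) hexp1
            · calc Real.exp (κ * t) * ∫ s in (0:ℝ)..t, g (t - s) * y s
                  ≤ Real.exp (κ * t) * (Real.exp (-(κ * t)) * S * θ) :=
                    mul_le_mul_of_nonneg_left hINT (Real.exp_pos _).le
                _ = θ * S := hexp2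
    have hSle : S ≤ A + θ * S := csSup_le hne (by rintro v ⟨s, hs, rfl⟩; exact hstep s hs)
    have hSD : S ≤ D := by
      rw [hDdef, le_div_iff₀ (by linarith : (0:ℝ) < 1 - θ)]
      nlinarith
    exact le_trans (hmem T ⟨hT, le_refl T⟩) hSD
  have hyle : ∀ t, 0 ≤ t → y t ≤ D * Real.exp (-(κ * t)) := by
    intro t ht
    have h := hykey t ht
    have hp : (0:ℝ) < Real.exp (κ * t) := Real.exp_pos _
    rw [Real.exp_neg, ← div_eq_mul_inv, le_div_iff₀ hp]
    linarith [mul_comm (y t) (Real.exp (κ * t))]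
  -- bound M
  set cγ : ℝ := ∫ u in Set.Ioi (0:ℝ), Real.exp (-γ * u) with hcγdef
  have hcγ0 : 0 ≤ cγ := setIntegral_nonneg measurableSet_Ioi (fun u _ => (Real.exp_pos _).le)
  set E : ℝ := C^2 + C^2 * D * cγ with hEdef
  have hMle : ∀ t, 0 ≤ t → M t ≤ E * Real.exp (-(κ * t)) := by
    intro t ht0
    rw [hM t ht0]
    have hx2 : (x t)^2 ≤ C^2 * Real.exp (-(κ * t)) := by
      have h1 : (x t)^2 ≤ C^2 * Real.exp (-(2*γ) * t) := by
        calc (x t)^2 = |x t|^2 := (sq_abs _).symm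
          _ ≤ (C * Real.exp (-γ * t))^2 := pow_le_pow_left₀ (abs_nonneg _) (hxdecay t ht0) 2
          _ = C^2 * Real.exp (-(2*γ) * t) := hexpsq C t
      refine h1.trans (mul_le_mul_of_nonneg_left (Real.exp_le_exp.2 (by nlinarith)) (sq_nonneg C))
    have hmeasL : Measurable fun s => (r (t - s))^2 * y s :=
      ((hrmeas.comp (measurable_const.sub measurable_id)).pow_const 2).mul hymeas
    obtain ⟨K, hK⟩ := hybdd t
    have hr2 : ∀ s, (r s)^2 ≤ C^2 * Real.exp (-(2*γ) * s) := by
      intro s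
      calc (r s)^2 = |r s|^2 := (sq_abs _).symm
        _ ≤ (C * Real.exp (-γ * s))^2 := pow_le_pow_left₀ (abs_nonneg _) ?_ 2
        _ = C^2 * Real.exp (-(2*γ) * s) := hexpsq C s
      rcases le_or_gt 0 s with h | h
      · exact hrdecay s h
      · rw [hrneg s h, abs_zero]; positivity
    have hintL : IntervalIntegrable (fun s => (r (t - s))^2 * y s) volume 0 t := by
      apply intIntegrable_of_bdd hmeasL (Kb := C^2 * max K 0)
      intro s hs
      rw [Set.uIoc_of_le ht0] at hs
      have h1 : (r (t - s))^2 ≤ C^2 := by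
        refine (hr2 (t - s)).trans ?_
        have : Real.exp (-(2*γ) * (t - s)) ≤ 1 := Real.exp_le_one_iff.2 (by nlinarith [hs.2])
        nlinarith [sq_nonneg C]
      have h2 : y s ≤ max K 0 := (hK s ⟨hs.1.le, hs.2⟩).trans (le_max_left _ _)
      rw [abs_of_nonneg (mul_nonneg (sq_nonneg _) (hynn s hs.1.le))]
      exact mul_le_mul h1 h2 (hynn s hs.1.le) (sq_nonneg C)
    have hmeasR : Measurable fun s => C^2 * D * Real.exp (-(κ * t)) * Real.exp (-γ * (t - s)) :=
      measurable_const.mul (Real.measurable_exp.comp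
        (measurable_const.mul (measurable_const.sub measurable_id)))
    have hintR : IntervalIntegrable
        (fun s => C^2 * D * Real.exp (-(κ * t)) * Real.exp (-γ * (t - s))) volume 0 t := by
      apply intIntegrable_of_bdd hmeasR (Kb := C^2 * D * Real.exp (-(κ * t)) * 1)
      intro s hs
      rw [Set.uIoc_of_le ht0] at hs
      have h3 : (0:ℝ) ≤ C^2 * D * Real.exp (-(κ * t)) := by positivity
      rw [abs_of_nonneg (mul_nonneg h3 (Real.exp_pos _).le)]
      exact mul_le_mul_of_nonneg_left (Real.exp_le_one_iff.2 (by nlinarith [hs.2, hγ.le])) h3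
    have hmono : (∫ s in (0:ℝ)..t, (r (t - s))^2 * y s) ≤
        ∫ s in (0:ℝ)..t, C^2 * D * Real.exp (-(κ * t)) * Real.exp (-γ * (t - s)) := by
      apply intervalIntegral.integral_mono_on ht0 hintL hintR
      intro s hs
      have h1 : (r (t - s))^2 ≤ C^2 * Real.exp (-(2*γ) * (t - s)) := hr2 (t - s)
      have h2 : y s ≤ D * Real.exp (-(κ * s)) := hyle s hs.1
      have h3 : Real.exp (-(2*γ) * (t - s)) * Real.exp (-(κ * s)) ≤
          Real.exp (-(κ * t)) * Real.exp (-γ * (t - s)) := by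
        rw [← Real.exp_add, ← Real.exp_add]
        apply Real.exp_le_exp.2
        nlinarith [hs.1, hs.2]
      calc (r (t - s))^2 * y s
          ≤ (C^2 * Real.exp (-(2*γ) * (t - s))) * (D * Real.exp (-(κ * s))) :=
            mul_le_mul h1 h2 (hynn s hs.1) (by positivity)
        _ = C^2 * D * (Real.exp (-(2*γ) * (t - s)) * Real.exp (-(κ * s))) := by ring
        _ ≤ C^2 * D * (Real.exp (-(κ * t)) * Real.exp (-γ * (t - s))) :=
            mul_le_mul_of_nonneg_left h3 (by positivity)
        _ = C^2 * D * Real.exp (-(κ * t)) * Real.exp (-γ * (t - s)) := by ring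
    have heq2 : (∫ s in (0:ℝ)..t, C^2 * D * Real.exp (-(κ * t)) * Real.exp (-γ * (t - s))) =
        C^2 * D * Real.exp (-(κ * t)) * ∫ s in (0:ℝ)..t, Real.exp (-γ * (t - s)) :=
      intervalIntegral.integral_const_mul _ _
    have heq3 : (∫ s in (0:ℝ)..t, Real.exp (-γ * (t - s))) =
        ∫ u in (0:ℝ)..t, Real.exp (-γ * u) := by
      have := intervalIntegral.integral_comp_sub_left (a := 0) (b := t)
        (fun u => Real.exp (-γ * u)) t
      simpa using this
    have hle4 : (∫ u in (0:ℝ)..t, Real.exp (-γ * u)) ≤ cγ := by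
      rw [intervalIntegral.integral_of_le ht0, hcγdef]
      exact setIntegral_mono_set (exp_neg_integrableOn_Ioi 0 hγ)
        (ae_of_all _ fun u => (Real.exp_pos _).le)
        (HasSubset.Subset.eventuallyLE Set.Ioc_subset_Ioi_self)
    have hfinal : (∫ s in (0:ℝ)..t, (r (t - s))^2 * y s) ≤
        C^2 * D * cγ * Real.exp (-(κ * t)) := by
      refine hmono.trans ?_
      rw [heq2, heq3]
      calc C^2 * D * Real.exp (-(κ * t)) * ∫ u in (0:ℝ)..t, Real.exp (-γ * u)
          ≤ C^2 * D * Real.exp (-(κ * t)) * cγ :=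
            mul_le_mul_of_nonneg_left hle4 (by positivity)
        _ = C^2 * D * cγ * Real.exp (-(κ * t)) := by ring
    calc (x t)^2 + (∫ s in (0:ℝ)..t, (r (t - s))^2 * y s)
        ≤ C^2 * Real.exp (-(κ * t)) + C^2 * D * cγ * Real.exp (-(κ * t)) :=
          add_le_add hx2 hfinal
      _ = E * Real.exp (-(κ * t)) := by rw [hEdef]; ring
  have hMnn : ∀ t, 0 ≤ t → 0 ≤ M t := by
    intro t ht0
    rw [hM t ht0]
    have : (0:ℝ) ≤ ∫ s in (0:ℝ)..t, (r (t - s))^2 * y s :=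
      intervalIntegral.integral_nonneg ht0
        (fun s hs => mul_nonneg (sq_nonneg _) (hynn s hs.1))
    nlinarith [sq_nonneg (x t)]
  -- conclude
  refine ⟨κ/2, by positivity, ?_⟩
  have hupper : Tendsto (fun t => E * Real.exp (-(κ/2 * t))) atTop (nhds 0) := by
    have h1 : Tendsto (fun t : ℝ => κ/2 * t) atTop atTop :=
      Tendsto.const_mul_atTop (by positivity) tendsto_id
    have h2 : Tendsto (fun t : ℝ => Real.exp (-(κ/2 * t))) atTop (nhds 0) :=
      Real.tendsto_exp_neg_atTop_nhds_zero.comp h1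
    simpa using h2.const_mul E
  apply tendsto_of_tendsto_of_tendsto_of_le_of_le' tendsto_const_nhds hupper
  · filter_upwards [eventually_ge_atTop (0:ℝ)] with t ht
    exact mul_nonneg (Real.exp_pos _).le (hMnn t ht)
  · filter_upwards [eventually_ge_atTop (0:ℝ)] with t ht
    calc Real.exp (κ/2 * t) * M t
        ≤ Real.exp (κ/2 * t) * (E * Real.exp (-(κ * t))) :=
          mul_le_mul_of_nonneg_left (hMle t ht) (Real.exp_pos _).le
      _ = E * Real.exp (-(κ/2 * t)) := by
          rw [mul_comm, mul_assoc, ← Real.exp_add]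
          ring_nf
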